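/- Let G be a 2-connected multigraph with spanning tree T, Y ⊆ E(G)∖T, and v a vertex of G. Then the auxiliary graph H^v_Y is connected. -/
import Mathlib


/-- A multigraph on vertex type `V` with edge type `E`: each edge has an
unordered pair of endpoints. -/
structure Multigraph (V E : Type) where
  ends : E → Sym2 V

namespace Multigraph

variable {V E : Type}

/-- Adjacency within the subgraph with edge set `F` and vertex set `S`. -/
def Adj (G : Multigraph V E) (F : Set E) (S : Set V) (a b : V) : Prop :=
  a ∈ S ∧ b ∈ S ∧ ∃ e ∈ F, G.ends e = s(a, b)

/-- Reachability (lying in the same connected component) in the subgraph with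
edge set `F` and vertex set `S`. -/
def Reach (G : Multigraph V E) (F : Set E) (S : Set V) : V → V → Prop :=
  Relation.ReflTransGen (G.Adj F S)

/-- `v` is `Y`-splittable: the auxiliary graph `H^v_Y`, whose vertices are the
connected components of `G` minus the edges `Y` and the vertex `v`, with edges
induced by `Y`-edges between components (loops for `Y`-edges within a
component), is bipartite.  This is expressed by a 2-colouring of the vertices
which is constant on the components of `G^v_Y` and proper on `Y`-edges not
incident to `v`. -/
def Splittable (G : Multigraph V E) (Y : Set E) (v : V) : Prop :=
  ∃ c : V → Bool,
    (∀ a b : V, G.Reach (Set.univ \ Y) {v}ᶜ a b → c a = c b) ∧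
    (∀ y ∈ Y, ∀ a b : V, G.ends y = s(a, b) → a ≠ v → b ≠ v → c a ≠ c b)

/-- `T` is a spanning tree of `G`: the subgraph `(V, T)` is connected and
every edge of `T` is a bridge of it. -/
def IsSpanningTree (G : Multigraph V E) (T : Set E) : Prop :=
  (∀ a b : V, G.Reach T Set.univ a b) ∧
  ∀ f ∈ T, ∃ a b : V, ¬ G.Reach (T \ {f}) Set.univ a b

/-- The set of tree edges lying on the tree path `P_{u,w}(T)` between `u` and
`w`: a tree edge lies on this path iff deleting it separates `u` from `w`. -/
def pathEdges (G : Multigraph V E) (T : Set E) (u w : V) : Set E :=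
  {f | f ∈ T ∧ ¬ G.Reach (T \ {f}) Set.univ u w}

/-- The fundamental path `P_e(T)` of an edge `e` (as a set of tree edges). -/
def fundPath (G : Multigraph V E) (T : Set E) (e : E) : Set E :=
  {f | f ∈ T ∧ ∀ a b : V, G.ends e = s(a, b) → ¬ G.Reach (T \ {f}) Set.univ a b}

/-- `v` lies on the tree path between `u` and `w`. -/
def OnPath (G : Multigraph V E) (T : Set E) (u w v : V) : Prop :=
  v = u ∨ v = w ∨ ¬ G.Reach T {v}ᶜ u w

/-- `v` lies on the fundamental path `P_e(T)` of the edge `e`. -/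
def OnFundPath (G : Multigraph V E) (T : Set E) (e : E) (v : V) : Prop :=
  ∀ a b : V, G.ends e = s(a, b) → G.OnPath T a b v

/-- The vertices covered by an edge set `F`. -/
def verts (G : Multigraph V E) (F : Set E) : Set V :=
  {v | ∃ e ∈ F, v ∈ G.ends e}

/-- `P⁻¹_{u,w}(G,T)`: the non-tree edges whose fundamental path contains the
tree path from `u` to `w`. -/
def Pinv (G : Multigraph V E) (T : Set E) (u w : V) : Set E :=
  {e | e ∉ T ∧ G.pathEdges T u w ⊆ G.fundPath T e}

/-- A multigraph is simple if it has no loops and no parallel edges. -/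
def Simple (G : Multigraph V E) : Prop :=
  (∀ e : E, ¬ (G.ends e).IsDiag) ∧ ∀ e f : E, G.ends e = G.ends f → e = f

/-- A `k`-separation: a partition of the edges into two parts, each of size at
least `k`, whose vertex sets share exactly `k` vertices. -/
def IsSep (G : Multigraph V E) (k : ℕ) (E1 E2 : Set E) : Prop :=
  E1 ∪ E2 = Set.univ ∧ Disjoint E1 E2 ∧ k ≤ E1.ncard ∧ k ≤ E2.ncard ∧
    (G.verts E1 ∩ G.verts E2).ncard = k

/-- Tutte `k`-connectivity: connected and without `ℓ`-separations for
`1 ≤ ℓ < k`. -/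
def TutteConnected (G : Multigraph V E) (k : ℕ) : Prop :=
  (∀ a b : V, G.Reach Set.univ Set.univ a b) ∧
  ∀ l : ℕ, 1 ≤ l → l < k → ¬ ∃ E1 E2 : Set E, G.IsSep l E1 E2

/-- A 2-separation with designated separating vertices `u` and `w`. -/
def IsTwoSep (G : Multigraph V E) (E1 E2 : Set E) (u w : V) : Prop :=
  E1 ∪ E2 = Set.univ ∧ Disjoint E1 E2 ∧ 2 ≤ E1.ncard ∧ 2 ≤ E2.ncard ∧
    u ≠ w ∧ G.verts E1 ∩ G.verts E2 = {u, w}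

/-- `v` is an articulation vertex of the subgraph with edge set `F`: after
removing `v` (and its incident edges), some two remaining vertices are
disconnected. -/
def ArticulationVertex (G : Multigraph V E) (F : Set E) (v : V) : Prop :=
  ∃ a b : V, a ≠ v ∧ b ≠ v ∧ ¬ G.Reach F {v}ᶜ a b

/-- The subgraph on the edge set `E1`, augmented by one new edge `{u, w}`. -/
def augment (G : Multigraph V E) (E1 : Set E) (u w : V) :
    Multigraph V (↥E1 ⊕ Unit) :=
  ⟨Sum.elim (fun e => G.ends e.1) (fun _ => s(u, w))⟩

/-- The edge set `Q` of the intersection of the fundamental paths of all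
edges in `Y`. -/
def Qedges (G : Multigraph V E) (T Y : Set E) : Set E :=
  ⋂ y ∈ Y, G.fundPath T y

theorem adj_symm' (G : Multigraph V E) {F : Set E} {S : Set V} {a b : V}
    (h : G.Adj F S a b) : G.Adj F S b a := by
  obtain ⟨ha, hb, e, he, hends⟩ := h
  exact ⟨hb, ha, e, he, by rw [hends, Sym2.eq_swap]⟩

theorem reach_symm' (G : Multigraph V E) {F : Set E} {S : Set V} {a b : V}
    (h : G.Reach F S a b) : G.Reach F S b a := by
  induction h with
  | refl => exact .refl
  | tail _ hadj ih => exact Relation.ReflTransGen.head (G.adj_symm' hadj) ih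

/-- From `v`, one cannot reach `t ≠ v` while avoiding `v`. -/
theorem not_reach_from_center (G : Multigraph V E) {F : Set E} {v t : V}
    (ht : t ≠ v) : ¬ G.Reach F {v}ᶜ v t := by
  intro h
  rcases Relation.ReflTransGen.cases_head h with h | ⟨c, hadj, _⟩
  · exact ht h.symm
  · exact hadj.1 rfl

/-- Any vertex reaching `t ≠ v` in `G` either reaches it avoiding `v`, or
there is an edge from `v` whose other end reaches `t` avoiding `v`. -/
theorem key_reach (G : Multigraph V E) (v t : V) (ht : t ≠ v) :
    ∀ x, G.Reach Set.univ Set.univ x t →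
      G.Reach Set.univ {v}ᶜ x t ∨
      ∃ e z, G.ends e = s(v, z) ∧ z ≠ v ∧ G.Reach Set.univ {v}ᶜ z t := by
  intro x hx
  induction hx using Relation.ReflTransGen.head_induction_on with
  | refl => exact Or.inl .refl
  | head hadj _ ih =>
    rcases ih with hy | hedge
    · rename_i x' y' _
      obtain ⟨-, -, e, -, hends⟩ := hadj
      by_cases hyv : y' = v
      · exact absurd (hyv ▸ hy) (G.not_reach_from_center ht)
      by_cases hxv : x' = v
      · exact Or.inr ⟨e, y', by rw [hends, hxv], hyv, hy⟩
      · exact Or.inl (Relation.ReflTransGen.head ⟨hxv, hyv, e, trivial, hends⟩ hy)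
    · exact Or.inr hedge

end Multigraph

/-- For a 2-connected multigraph `G` with spanning tree `T`, `Y ⊆ E(G)∖T`
and a vertex `v`, the auxiliary graph `H^v_Y` is connected; equivalently, any
two vertices other than `v` are joined by a walk avoiding `v` (whose edges
are either component edges of `G^v_Y` or `Y`-edges). -/
theorem aux_graph_connected {V E : Type} [Fintype V] [Fintype E]
    (G : Multigraph V E) (h2 : G.TutteConnected 2)
    (T : Set E) (hT : G.IsSpanningTree T)
    (Y : Set E) (hYT : ∀ y ∈ Y, y ∉ T) (v : V) :
    ∀ a b : V, a ≠ v → b ≠ v → G.Reach Set.univ {v}ᶜ a b := by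
  intro a b ha hb
  by_contra hab
  -- S is the component of `a` in `G - v`.
  set S : Set V := {x | G.Reach Set.univ {v}ᶜ a x} with hS
  have haS : a ∈ S := Relation.ReflTransGen.refl
  have hvS : v ∉ S := by
    intro h
    rcases Relation.ReflTransGen.cases_tail h with h | ⟨c, _, hadj⟩
    · exact ha h.symm
    · exact hadj.2.1 rfl
  have hbS : b ∉ S := hab
  -- S is closed under edges avoiding v
  have hclose : ∀ (e : E) (x y : V), G.ends e = s(x, y) → x ∈ S → y ≠ v → y ∈ S := by
    intro e x y hends hx hy
    exact Relation.ReflTransGen.tail hx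
      ⟨fun h => hvS (h ▸ hx), hy, e, trivial, hends⟩
  set E1 : Set E := {e | ∃ x ∈ S, x ∈ G.ends e} with hE1
  -- an edge from v into S
  obtain ⟨e1, z1, hz1ends, hz1v, hz1⟩ :
      ∃ e z, G.ends e = s(v, z) ∧ z ≠ v ∧ G.Reach Set.univ {v}ᶜ z a := by
    rcases G.key_reach v a ha b (h2.1 b a) with h | h
    · exact absurd (G.reach_symm' h) hab
    · exact h
  have hz1S : z1 ∈ S := G.reach_symm' hz1
  have he1 : e1 ∈ E1 := ⟨z1, hz1S, by rw [hz1ends]; exact Sym2.mem_mk_right _ _⟩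
  -- an edge from v out of S
  obtain ⟨e2, z2, hz2ends, hz2v, hz2⟩ :
      ∃ e z, G.ends e = s(v, z) ∧ z ≠ v ∧ G.Reach Set.univ {v}ᶜ z b := by
    rcases G.key_reach v b hb v (h2.1 v b) with h | h
    · exact absurd h (G.not_reach_from_center hb)
    · exact h
  have hz2S : z2 ∉ S := fun h => hab (Relation.ReflTransGen.trans h hz2)
  have he2 : e2 ∉ E1 := by
    rintro ⟨x, hxS, hxe⟩
    rw [hz2ends, Sym2.mem_iff] at hxe
    rcases hxe with rfl | rfl
    · exact hvS hxS
    · exact hz2S hxS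
  -- the two vertex sets meet exactly in v
  have hinter : G.verts E1 ∩ G.verts E1ᶜ = {v} := by
    ext x
    constructor
    · rintro ⟨⟨f1, hf1, hx1⟩, ⟨f2, hf2, hx2⟩⟩
      by_contra hxv
      have hxv : x ≠ v := hxv
      obtain ⟨y, hyS, hye⟩ := hf1
      have hxS : x ∈ S := by
        by_cases hxy : x = y
        · exact hxy ▸ hyS
        · have := (Sym2.mem_and_mem_iff (Ne.symm hxy)).mp ⟨hye, hx1⟩
          exact hclose f1 y x this hyS hxv
      exact hf2 ⟨x, hxS, hx2⟩
    · rintro rfl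
      refine ⟨⟨e1, he1, ?_⟩, ⟨e2, he2, ?_⟩⟩
      · rw [hz1ends]; exact Sym2.mem_mk_left _ _
      · rw [hz2ends]; exact Sym2.mem_mk_left _ _
  refine h2.2 1 le_rfl one_lt_two ⟨E1, E1ᶜ, Set.union_compl_self _,
    disjoint_compl_right, ?_, ?_, ?_⟩
  · have : (0 : ℕ) < E1.ncard := (Set.ncard_pos (Set.toFinite _)).mpr ⟨e1, he1⟩
    omega
  · have : (0 : ℕ) < E1ᶜ.ncard := (Set.ncard_pos (Set.toFinite _)).mpr ⟨e2, he2⟩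
    omega
  · rw [hinter, Set.ncard_singleton]
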